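/- Let φ be a Schwartz function on ℝⁿ satisfying |φ(y)| ≤ C(1+|y|)^{-n-δ} for some δ > 0, let g ∈ BMO(ℝⁿ), and let Q be a cube. Then for all x ∈ Q and t > l(Q), |φ_t * (g − ⟨g⟩_Q)(x)| ≲ (1 + |log(t/l(Q))|) ‖g‖_{BMO}, with implicit constant depending on n, δ, C. -/

import Mathlib

open MeasureTheory

noncomputable section

/-- The closed axis-parallel cube in `ℝⁿ` with center `c` and side length `l`. -/
def cubeC {n : ℕ} (c : EuclideanSpace ℝ (Fin n)) (l : ℝ) : Set (EuclideanSpace ℝ (Fin n)) :=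
  {y | ∀ j, |y j - c j| ≤ l / 2}

/-- The average of `g` over the cube with center `c` and side length `l`. -/
def cAvg {n : ℕ} (g : EuclideanSpace ℝ (Fin n) → ℝ) (c : EuclideanSpace ℝ (Fin n)) (l : ℝ) : ℝ :=
  (volume (cubeC c l)).toReal⁻¹ * ∫ y in cubeC c l, g y

namespace BMOaux

variable {n : ℕ}

lemma cubeC_eq (c : EuclideanSpace ℝ (Fin n)) (l : ℝ) :
    cubeC c l = (MeasurableEquiv.toLp 2 (Fin n → ℝ)).symm ⁻¹'
      (Set.univ.pi fun j => Set.Icc (c j - l / 2) (c j + l / 2)) := by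
  ext y
  simp only [cubeC, Set.mem_setOf_eq, Set.mem_preimage, Set.mem_pi, Set.mem_univ, true_implies,
    Set.mem_Icc, MeasurableEquiv.coe_toLp_symm]
  constructor
  · intro h j; have := h j; constructor <;> [linarith [abs_le.1 this |>.1]; linarith [abs_le.1 this |>.2]]
  · intro h j; rw [abs_le]; have := h j; constructor <;> [linarith [this.1]; linarith [this.2]]

lemma volume_cubeC (c : EuclideanSpace ℝ (Fin n)) {l : ℝ} (hl : 0 ≤ l) :
    volume (cubeC c l) = ENNReal.ofReal l ^ n := by
  rw [cubeC_eq, (EuclideanSpace.volume_preserving_symm_measurableEquiv_toLp (Fin n)).measure_preimage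
    (by exact (MeasurableSet.univ_pi fun j => measurableSet_Icc).nullMeasurableSet)]
  rw [volume_pi_pi]
  have h : ∀ x : Fin n, c x + l / 2 - (c x - l / 2) = l := fun x => by ring
  simp only [Real.volume_Icc, h]
  simp [Finset.prod_const]

lemma volume_cubeC_toReal (c : EuclideanSpace ℝ (Fin n)) {l : ℝ} (hl : 0 ≤ l) :
    (volume (cubeC c l)).toReal = l ^ n := by
  rw [volume_cubeC c hl]
  rw [← ENNReal.ofReal_pow hl, ENNReal.toReal_ofReal (by positivity)]

lemma measurableSet_cubeC (c : EuclideanSpace ℝ (Fin n)) (l : ℝ) :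
    MeasurableSet (cubeC c l) := by
  rw [cubeC_eq]
  exact (MeasurableEquiv.toLp 2 (Fin n → ℝ)).symm.measurable
    (MeasurableSet.univ_pi fun j => measurableSet_Icc)

lemma isCompact_cubeC (c : EuclideanSpace ℝ (Fin n)) (l : ℝ) :
    IsCompact (cubeC c l) := by
  have : cubeC c l = (PiLp.continuousLinearEquiv 2 ℝ (fun _ : Fin n => ℝ)).toHomeomorph ⁻¹'
      (Set.univ.pi fun j => Set.Icc (c j - l / 2) (c j + l / 2)) := cubeC_eq c l
  rw [this]
  rw [Homeomorph.isCompact_preimage]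
  exact isCompact_univ_pi fun j => isCompact_Icc
  
end BMOaux

namespace Test
variable {n : ℕ}

lemma cubeC_mono (c : EuclideanSpace ℝ (Fin n)) {l l' : ℝ} (h : l ≤ l') :
    cubeC c l ⊆ cubeC c l' := fun y hy j => le_trans (hy j) (by linarith)

lemma cubeC_subset_double {c x : EuclideanSpace ℝ (Fin n)} {l : ℝ} (hx : x ∈ cubeC c l) :
    cubeC c l ⊆ cubeC x (2 * l) := by
  intro y hy j
  have h1 := hx j
  have h2 := hy j
  calc |y j - x j| ≤ |y j - c j| + |c j - x j| := by
        have := abs_sub_abs_le_abs_sub (y j - c j) (x j - c j)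
        calc |y j - x j| = |(y j - c j) - (x j - c j)| := by ring_nf
          _ ≤ |y j - c j| + |x j - c j| := abs_sub _ _
          _ = |y j - c j| + |c j - x j| := by rw [abs_sub_comm (x j)]
    _ ≤ l / 2 + l / 2 := add_le_add h2 (by rwa [abs_sub_comm])
    _ = 2 * l / 2 := by ring

lemma integrableOn_cubeC {g : EuclideanSpace ℝ (Fin n) → ℝ}
    (hg : LocallyIntegrable g volume) (c : EuclideanSpace ℝ (Fin n)) (l : ℝ) :
    IntegrableOn g (cubeC c l) volume :=
  hg.integrableOn_isCompact (BMOaux.isCompact_cubeC c l)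

lemma integrableOn_sub_const {g : EuclideanSpace ℝ (Fin n) → ℝ}
    (hg : LocallyIntegrable g volume) (c : EuclideanSpace ℝ (Fin n)) (l : ℝ) (A : ℝ) :
    IntegrableOn (fun y => |g y - A|) (cubeC c l) volume := by
  refine ((integrableOn_cubeC hg c l).sub ?_).abs
  exact integrableOn_const (BMOaux.isCompact_cubeC c l).measure_lt_top.ne

lemma avg_diff {g : EuclideanSpace ℝ (Fin n) → ℝ} (hg : LocallyIntegrable g volume) {B : ℝ}
    (hB : ∀ (c : EuclideanSpace ℝ (Fin n)) (l : ℝ), 0 < l →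
      (volume (cubeC c l)).toReal⁻¹ * ∫ y in cubeC c l, |g y - cAvg g c l| ≤ B)
    {c1 c2 : EuclideanSpace ℝ (Fin n)} {l1 l2 : ℝ} (h1 : 0 < l1) (h2 : 0 < l2)
    (hsub : cubeC c1 l1 ⊆ cubeC c2 l2) :
    |cAvg g c1 l1 - cAvg g c2 l2| ≤ (l2 / l1) ^ n * B := by
  set A2 := cAvg g c2 l2 with hA2
  have v1 : (volume (cubeC c1 l1)).toReal = l1 ^ n := BMOaux.volume_cubeC_toReal c1 h1.le
  have v2 : (volume (cubeC c2 l2)).toReal = l2 ^ n := BMOaux.volume_cubeC_toReal c2 h2.le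
  have v1pos : (0:ℝ) < l1 ^ n := by positivity
  have v2pos : (0:ℝ) < l2 ^ n := by positivity
  have key : cAvg g c1 l1 - A2 = (l1 ^ n)⁻¹ * ∫ y in cubeC c1 l1, (g y - A2) := by
    rw [integral_sub (integrableOn_cubeC hg c1 l1)
      (integrableOn_const (BMOaux.isCompact_cubeC c1 l1).measure_lt_top.ne)]
    rw [setIntegral_const, measureReal_def, v1, smul_eq_mul]
    rw [cAvg, v1]
    field_simp
  rw [key, abs_mul, abs_of_pos (by positivity : (0:ℝ) < (l1 ^ n)⁻¹)]
  have step1 : |∫ y in cubeC c1 l1, (g y - A2)| ≤ ∫ y in cubeC c1 l1, |g y - A2| := by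
    simpa [Real.norm_eq_abs] using
      norm_integral_le_integral_norm (μ := volume.restrict (cubeC c1 l1)) (fun y => g y - A2)
  have step2 : ∫ y in cubeC c1 l1, |g y - A2| ≤ ∫ y in cubeC c2 l2, |g y - A2| := by
    refine setIntegral_mono_set (integrableOn_sub_const hg c2 l2 A2) ?_ hsub.eventuallyLE
    exact Filter.Eventually.of_forall fun y => abs_nonneg _
  have step3 : ∫ y in cubeC c2 l2, |g y - A2| ≤ l2 ^ n * B := by
    have := hB c2 l2 h2
    rw [v2] at this
    calc ∫ y in cubeC c2 l2, |g y - A2| = l2 ^ n * ((l2 ^ n)⁻¹ * ∫ y in cubeC c2 l2, |g y - A2|) := by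
          field_simp
      _ ≤ l2 ^ n * B := mul_le_mul_of_nonneg_left this v2pos.le
  calc (l1 ^ n)⁻¹ * |∫ y in cubeC c1 l1, (g y - A2)|
      ≤ (l1 ^ n)⁻¹ * (l2 ^ n * B) := by
        refine mul_le_mul_of_nonneg_left ?_ (by positivity)
        exact step1.trans (step2.trans step3)
    _ = (l2 / l1) ^ n * B := by rw [div_pow]; field_simp

lemma avg_diff_ratio {g : EuclideanSpace ℝ (Fin n) → ℝ} (hg : LocallyIntegrable g volume) {B : ℝ}
    (hB : ∀ (c : EuclideanSpace ℝ (Fin n)) (l : ℝ), 0 < l →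
      (volume (cubeC c l)).toReal⁻¹ * ∫ y in cubeC c l, |g y - cAvg g c l| ≤ B)
    (hB0 : 0 ≤ B)
    {c1 c2 : EuclideanSpace ℝ (Fin n)} {l1 l2 r : ℝ} (h1 : 0 < l1) (h2 : 0 < l2)
    (hsub : cubeC c1 l1 ⊆ cubeC c2 l2) (hr : l2 ≤ r * l1) :
    |cAvg g c1 l1 - cAvg g c2 l2| ≤ r ^ n * B := by
  refine (avg_diff hg hB h1 h2 hsub).trans ?_
  refine mul_le_mul_of_nonneg_right ?_ hB0
  refine pow_le_pow_left₀ (by positivity) ?_ n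
  rw [div_le_iff₀ h1]
  linarith

lemma avg_chain {g : EuclideanSpace ℝ (Fin n) → ℝ} (hg : LocallyIntegrable g volume) {B : ℝ}
    (hB : ∀ (c : EuclideanSpace ℝ (Fin n)) (l : ℝ), 0 < l →
      (volume (cubeC c l)).toReal⁻¹ * ∫ y in cubeC c l, |g y - cAvg g c l| ≤ B)
    (hB0 : 0 ≤ B) (x : EuclideanSpace ℝ (Fin n)) {s : ℝ} (hs : 0 < s) (m : ℕ) :
    |cAvg g x ((2:ℝ) ^ m * s) - cAvg g x s| ≤ (m : ℝ) * (2 ^ n * B) := by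
  induction m with
  | zero => simp
  | succ m ih =>
    have hsm : (0:ℝ) < 2 ^ m * s := by positivity
    have step : |cAvg g x ((2:ℝ) ^ (m+1) * s) - cAvg g x ((2:ℝ) ^ m * s)| ≤ 2 ^ n * B := by
      have h2m : ((2:ℝ) ^ m * s) ≤ (2:ℝ) ^ (m+1) * s := by
        rw [pow_succ]; nlinarith [pow_pos (by norm_num : (0:ℝ) < 2) m]
      have := avg_diff_ratio hg hB hB0 (c1 := x) (c2 := x)
        (l1 := (2:ℝ) ^ m * s) (l2 := (2:ℝ) ^ (m+1) * s) (r := 2) hsm (by positivity)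
        (cubeC_mono x h2m) (by rw [pow_succ]; ring_nf; exact le_rfl)
      rw [abs_sub_comm] at this
      exact this
    calc |cAvg g x ((2:ℝ) ^ (m+1) * s) - cAvg g x s|
        ≤ |cAvg g x ((2:ℝ) ^ (m+1) * s) - cAvg g x ((2:ℝ) ^ m * s)|
          + |cAvg g x ((2:ℝ) ^ m * s) - cAvg g x s| := abs_sub_le _ _ _
      _ ≤ 2 ^ n * B + (m : ℝ) * (2 ^ n * B) := add_le_add step ih
      _ = ((m + 1 : ℕ) : ℝ) * (2 ^ n * B) := by push_cast; ring

lemma dyadic_bounds {l t : ℝ} (hl : 0 < l) (hlt : l < t) :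
    t ≤ 2 ^ (⌈Real.logb 2 (t/l)⌉₊) * l ∧ (2:ℝ) ^ (⌈Real.logb 2 (t/l)⌉₊) * l ≤ 2 * t := by
  have ht : 0 < t := hl.trans hlt
  have hz : (1:ℝ) < t / l := (one_lt_div hl).2 hlt
  have hz0 : (0:ℝ) < t / l := by linarith
  have hlog : 0 < Real.logb 2 (t/l) := Real.logb_pos one_lt_two hz
  set u : ℕ := ⌈Real.logb 2 (t/l)⌉₊ with hu
  have h1 : t / l ≤ (2:ℝ) ^ u := by
    have : t / l = (2:ℝ) ^ (Real.logb 2 (t/l)) := (Real.rpow_logb two_pos (by norm_num) hz0).symm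
    rw [this, ← Real.rpow_natCast 2 u]
    exact Real.rpow_le_rpow_of_exponent_le one_le_two (Nat.le_ceil _)
  have h2 : (2:ℝ) ^ u ≤ 2 * (t / l) := by
    have hc : (u:ℝ) ≤ Real.logb 2 (t/l) + 1 := (Nat.ceil_lt_add_one hlog.le).le
    calc (2:ℝ) ^ u = (2:ℝ) ^ (u:ℝ) := (Real.rpow_natCast 2 u).symm
      _ ≤ (2:ℝ) ^ (Real.logb 2 (t/l) + 1) := Real.rpow_le_rpow_of_exponent_le one_le_two hc
      _ = 2 * (t / l) := by
          rw [Real.rpow_add two_pos, Real.rpow_logb two_pos (by norm_num) hz0,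
            Real.rpow_one]; ring
  constructor
  · calc t = (t / l) * l := by field_simp
      _ ≤ (2:ℝ) ^ u * l := mul_le_mul_of_nonneg_right h1 hl.le
  · calc (2:ℝ) ^ u * l ≤ (2 * (t/l)) * l := mul_le_mul_of_nonneg_right h2 hl.le
      _ = 2 * t := by field_simp

lemma avg_master {g : EuclideanSpace ℝ (Fin n) → ℝ} (hg : LocallyIntegrable g volume) {B : ℝ}
    (hB : ∀ (c : EuclideanSpace ℝ (Fin n)) (l : ℝ), 0 < l →
      (volume (cubeC c l)).toReal⁻¹ * ∫ y in cubeC c l, |g y - cAvg g c l| ≤ B)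
    (hB0 : 0 ≤ B) {c x : EuclideanSpace ℝ (Fin n)} {l t : ℝ}
    (hl : 0 < l) (hx : x ∈ cubeC c l) (hlt : l < t) (k u : ℕ)
    (htu : t ≤ 2 ^ u * l) (hut : (2:ℝ) ^ u * l ≤ 2 * t) :
    |cAvg g x ((2:ℝ) ^ (k+1) * t) - cAvg g c l| ≤ ((k:ℝ) + u + 3) * (4 ^ n * B) := by
  have ht : 0 < t := hl.trans hlt
  have h2l : (0:ℝ) < 2 * l := by linarith
  have pk : (0:ℝ) < (2:ℝ) ^ (k+1) * t := by positivity
  have p2 : (0:ℝ) < (2:ℝ) ^ (k+u+1) * (2 * l) := by positivity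
  have hpow : ((2:ℝ) ^ n) ≤ 4 ^ n := pow_le_pow_left₀ (by norm_num) (by norm_num) n
  -- P1
  have P1 : |cAvg g c l - cAvg g x (2 * l)| ≤ 2 ^ n * B := by
    have := avg_diff_ratio hg hB hB0 (r := 2) hl h2l (cubeC_subset_double hx) le_rfl
    simpa using this
  -- P2
  have P2 : |cAvg g x ((2:ℝ) ^ (k+u+1) * (2 * l)) - cAvg g x (2 * l)| ≤
      ((k:ℝ) + u + 1) * (2 ^ n * B) := by
    have := avg_chain hg hB hB0 x h2l (k+u+1)
    refine this.trans ?_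
    have : ((k+u+1 : ℕ) : ℝ) = (k:ℝ) + u + 1 := by push_cast; ring
    rw [this]
  -- P3
  have key_eq : (2:ℝ) ^ (k+u+1) * (2 * l) = (2:ℝ) ^ (k+u+2) * l := by ring
  have P3 : |cAvg g x ((2:ℝ) ^ (k+1) * t) - cAvg g x ((2:ℝ) ^ (k+u+1) * (2 * l))| ≤
      4 ^ n * B := by
    rw [key_eq]
    refine avg_diff_ratio hg hB hB0 (r := 4) pk (by positivity) (cubeC_mono x ?_) ?_
    · -- 2^(k+1) t ≤ 2^(k+u+2) l
      have : (2:ℝ) ^ (k+u+2) * l = (2:ℝ) ^ (k+1) * ((2:ℝ) ^ (u+1) * l) := by ring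
      rw [this]
      refine mul_le_mul_of_nonneg_left ?_ (by positivity)
      calc t ≤ 2 ^ u * l := htu
        _ ≤ 2 ^ (u+1) * l := by
            rw [pow_succ]
            nlinarith [pow_pos (by norm_num : (0:ℝ) < 2) u, hl]
    · -- 2^(k+u+2) l ≤ 4 * (2^(k+1) t)
      have e : (2:ℝ) ^ (k+u+2) * l = 2 * (2:ℝ) ^ (k+1) * ((2:ℝ) ^ u * l) := by ring
      rw [e]
      calc 2 * (2:ℝ) ^ (k+1) * ((2:ℝ) ^ u * l) ≤ 2 * (2:ℝ) ^ (k+1) * (2 * t) := by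
            refine mul_le_mul_of_nonneg_left hut (by positivity)
        _ = 4 * ((2:ℝ) ^ (k+1) * t) := by ring
  calc |cAvg g x ((2:ℝ) ^ (k+1) * t) - cAvg g c l|
      ≤ |cAvg g x ((2:ℝ) ^ (k+1) * t) - cAvg g x ((2:ℝ) ^ (k+u+1) * (2 * l))|
        + (|cAvg g x ((2:ℝ) ^ (k+u+1) * (2 * l)) - cAvg g x (2 * l)|
        + |cAvg g x (2 * l) - cAvg g c l|) := by
        have := abs_sub_le (cAvg g x ((2:ℝ) ^ (k+1) * t)) (cAvg g x ((2:ℝ) ^ (k+u+1) * (2 * l)))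
          (cAvg g c l)
        have h2 := abs_sub_le (cAvg g x ((2:ℝ) ^ (k+u+1) * (2 * l))) (cAvg g x (2 * l))
          (cAvg g c l)
        linarith
    _ ≤ 4 ^ n * B + (((k:ℝ) + u + 1) * (2 ^ n * B) + 2 ^ n * B) := by
        rw [abs_sub_comm] at P1
        exact add_le_add P3 (add_le_add P2 P1)
    _ ≤ ((k:ℝ) + u + 3) * (4 ^ n * B) := by
        have h1 : ((k:ℝ) + u + 1) * (2 ^ n * B) ≤ ((k:ℝ) + u + 1) * (4 ^ n * B) := by
          refine mul_le_mul_of_nonneg_left ?_ (by positivity)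
          exact mul_le_mul_of_nonneg_right hpow hB0
        have h2 : (2:ℝ) ^ n * B ≤ 4 ^ n * B := mul_le_mul_of_nonneg_right hpow hB0
        nlinarith [mul_nonneg (pow_nonneg (by norm_num : (0:ℝ) ≤ 4) n) hB0]

lemma osc_bound {g : EuclideanSpace ℝ (Fin n) → ℝ} (hg : LocallyIntegrable g volume) {B : ℝ}
    (hB : ∀ (c : EuclideanSpace ℝ (Fin n)) (l : ℝ), 0 < l →
      (volume (cubeC c l)).toReal⁻¹ * ∫ y in cubeC c l, |g y - cAvg g c l| ≤ B)
    (x : EuclideanSpace ℝ (Fin n)) {s : ℝ} (hs : 0 < s) (A : ℝ) :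
    ∫ y in cubeC x s, |g y - A| ≤ s ^ n * (B + |cAvg g x s - A|) := by
  have vtr : (volume (cubeC x s)).toReal = s ^ n := BMOaux.volume_cubeC_toReal x hs.le
  have vpos : (0:ℝ) < s ^ n := by positivity
  have hint1 : IntegrableOn (fun y => |g y - cAvg g x s|) (cubeC x s) volume :=
    integrableOn_sub_const hg x s _
  have pointwise : ∀ y, |g y - A| ≤ |g y - cAvg g x s| + |cAvg g x s - A| := by
    intro y
    calc |g y - A| = |(g y - cAvg g x s) + (cAvg g x s - A)| := by ring_nf
      _ ≤ |g y - cAvg g x s| + |cAvg g x s - A| := abs_add_le _ _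
  calc ∫ y in cubeC x s, |g y - A|
      ≤ ∫ y in cubeC x s, (|g y - cAvg g x s| + |cAvg g x s - A|) := by
        refine integral_mono (integrableOn_sub_const hg x s A) ?_ pointwise
        exact hint1.add (integrableOn_const (BMOaux.isCompact_cubeC x s).measure_lt_top.ne)
    _ = (∫ y in cubeC x s, |g y - cAvg g x s|) + s ^ n * |cAvg g x s - A| := by
        rw [integral_add hint1
          (integrableOn_const (BMOaux.isCompact_cubeC x s).measure_lt_top.ne),
          setIntegral_const, measureReal_def, vtr, smul_eq_mul]
    _ ≤ s ^ n * B + s ^ n * |cAvg g x s - A| := by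
        have := hB x s hs
        rw [vtr] at this
        have : ∫ y in cubeC x s, |g y - cAvg g x s| ≤ s ^ n * B := by
          calc ∫ y in cubeC x s, |g y - cAvg g x s|
              = s ^ n * ((s ^ n)⁻¹ * ∫ y in cubeC x s, |g y - cAvg g x s|) := by field_simp
            _ ≤ s ^ n * B := mul_le_mul_of_nonneg_left this vpos.le
        linarith
    _ = s ^ n * (B + |cAvg g x s - A|) := by ring

lemma abs_coord_le_norm (z : EuclideanSpace ℝ (Fin n)) (j : Fin n) : |z j| ≤ ‖z‖ := by
  rw [EuclideanSpace.norm_eq]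
  rw [← Real.sqrt_sq_eq_abs]
  refine Real.sqrt_le_sqrt ?_
  have : (z j) ^ 2 = ‖z j‖ ^ 2 := by rw [Real.norm_eq_abs, sq_abs]
  rw [this]
  exact Finset.single_le_sum (f := fun i => ‖z i‖ ^ 2) (fun i _ => by positivity)
    (Finset.mem_univ j)

lemma norm_scaled_ge {x y : EuclideanSpace ℝ (Fin n)} {t : ℝ} (ht : 0 < t) {k : ℕ}
    (hy : y ∉ cubeC x ((2:ℝ) ^ (k+1) * t)) : (2:ℝ) ^ k ≤ ‖t⁻¹ • (x - y)‖ := by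
  simp only [cubeC, Set.mem_setOf_eq, not_forall] at hy
  obtain ⟨j, hj⟩ := hy
  push_neg at hj
  have h1 : (2:ℝ) ^ k * t < |y j - x j| := by
    have : (2:ℝ) ^ (k+1) * t / 2 = 2 ^ k * t := by rw [pow_succ]; ring
    linarith [this ▸ hj]
  have h2 : |y j - x j| = |(x - y) j| := by
    rw [PiLp.sub_apply, abs_sub_comm]
  have h3 : |(x - y) j| ≤ ‖x - y‖ := abs_coord_le_norm _ j
  rw [norm_smul, Real.norm_eq_abs, abs_of_pos (inv_pos.2 ht)]
  rw [inv_mul_eq_div, le_div_iff₀ ht]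
  nlinarith [h2 ▸ h1, h3]

end Test

set_option maxHeartbeats 1000000
open Test

/-- if `φ` is a Schwartz function with `|φ(y)| ≤ Cφ (1+|y|)^{-n-δ}` and
`g ∈ BMO(ℝⁿ)` with BMO norm at most `B`, then for every cube `Q` (center `c`, side `l`),
`x ∈ Q` and `t > l`, `|φ_t * (g - ⟨g⟩_Q)(x)| ≲ (1 + |log(t/l)|) B`, with constant depending
only on `n`, `δ` and `Cφ`. -/
theorem bmo_convolution_bound (n : ℕ) (δ Cφ : ℝ) (hδ : 0 < δ) :
    ∃ C : ℝ, 0 < C ∧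
      ∀ (φ : SchwartzMap (EuclideanSpace ℝ (Fin n)) ℝ),
        (∀ y, |φ y| ≤ Cφ * (1 + ‖y‖) ^ (-(n : ℝ) - δ)) →
        ∀ (g : EuclideanSpace ℝ (Fin n) → ℝ), LocallyIntegrable g volume →
        ∀ B : ℝ,
        (∀ (c : EuclideanSpace ℝ (Fin n)) (l : ℝ), 0 < l →
          (volume (cubeC c l)).toReal⁻¹ * ∫ y in cubeC c l, |g y - cAvg g c l| ≤ B) →
        ∀ (c : EuclideanSpace ℝ (Fin n)) (l : ℝ), 0 < l →
        ∀ x ∈ cubeC c l, ∀ t : ℝ, l < t →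
          |∫ y, t ^ (-(n : ℝ)) * φ (t⁻¹ • (x - y)) * (g y - cAvg g c l)| ≤
            C * (1 + |Real.log (t / l)|) * B := by
  have hlog2 : (0:ℝ) < Real.log 2 := Real.log_pos one_lt_two
  have hlog2' : Real.log 2 ≤ 1 := by
    have := Real.log_two_lt_d9
    linarith
  set r : ℝ := (2:ℝ) ^ (-δ) with hrdef
  have hr0 : 0 < r := Real.rpow_pos_of_pos two_pos _
  have hr1 : r < 1 := Real.rpow_lt_one_of_one_lt_of_neg one_lt_two (by linarith)
  set T : ℝ := r / (1 - r) ^ 2 + (1 - r)⁻¹ with hTdef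
  have hT0 : 0 ≤ T := by
    have h1r : 0 < 1 - r := by linarith
    positivity
  refine ⟨(|Cφ| + 1) * 16 ^ n * (6 / Real.log 2) * (1 + T), by positivity, ?_⟩
  intro φ hφ g hg B hB c l hl x hx t hlt
  have ht : 0 < t := hl.trans hlt
  have hB0 : 0 ≤ B := by
    refine le_trans ?_ (hB c l hl)
    have : 0 ≤ ∫ y in cubeC c l, |g y - cAvg g c l| :=
      integral_nonneg fun y => abs_nonneg _
    positivity
  have hC0 : 0 ≤ Cφ := by
    have h0 := hφ 0
    simp only [norm_zero, add_zero, Real.one_rpow, mul_one] at h0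
    exact le_trans (abs_nonneg _) h0
  set A := cAvg g c l with hA
  set u : ℕ := ⌈Real.logb 2 (t/l)⌉₊ with hu
  obtain ⟨htu, hut⟩ := dyadic_bounds hl hlt
  set W : EuclideanSpace ℝ (Fin n) → ℝ := fun y => t ^ (-(n:ℝ)) * |φ (t⁻¹ • (x - y))| with hWdef
  have htn : t ^ (-(n:ℝ)) = ((t:ℝ) ^ n)⁻¹ := by
    rw [Real.rpow_neg ht.le, Real.rpow_natCast]
  have htn0 : 0 ≤ t ^ (-(n:ℝ)) := Real.rpow_nonneg ht.le _
  set S : ℕ → Set (EuclideanSpace ℝ (Fin n)) := fun K => cubeC x ((2:ℝ) ^ (K+1) * t) with hSdef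
  have hSmeas : ∀ K, MeasurableSet (S K) := fun K => BMOaux.measurableSet_cubeC _ _
  have hScompact : ∀ K, IsCompact (S K) := fun K => BMOaux.isCompact_cubeC _ _
  have hSmono : Monotone S := by
    intro K K' hKK'
    refine cubeC_mono x ?_
    have h2 : (2:ℝ) ^ (K+1) ≤ 2 ^ (K'+1) :=
      pow_le_pow_right₀ one_le_two (by omega)
    nlinarith
  have hSunion : (⋃ K, S K) = Set.univ := by
    rw [Set.eq_univ_iff_forall]
    intro y
    obtain ⟨K, hK⟩ := pow_unbounded_of_one_lt (y := (2:ℝ)) (‖x - y‖ / t) one_lt_two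
    refine Set.mem_iUnion.2 ⟨K, fun j => ?_⟩
    have h1 : |y j - x j| ≤ ‖x - y‖ := by
      have : |y j - x j| = |(x - y) j| := by rw [PiLp.sub_apply, abs_sub_comm]
      rw [this]
      exact abs_coord_le_norm _ j
    have h2 : ‖x - y‖ < 2 ^ K * t := by
      rw [div_lt_iff₀ ht] at hK; linarith
    have h3 : (2:ℝ) ^ (K+1) * t / 2 = 2 ^ K * t := by rw [pow_succ]; ring
    rw [h3]; linarith
  have hWcont : Continuous W := by
    rw [hWdef]
    exact continuous_const.mul
      ((φ.continuous.comp (by fun_prop : Continuous fun y : EuclideanSpace ℝ (Fin n) => t⁻¹ • (x - y))).abs)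
  have hWnn : ∀ y, 0 ≤ W y := fun y => mul_nonneg htn0 (abs_nonneg _)
  have hWa : ∀ y, W y ≤ t ^ (-(n:ℝ)) * Cφ := by
    intro y
    refine mul_le_mul_of_nonneg_left ?_ htn0
    refine (hφ _).trans ?_
    have h1 : (1 + ‖t⁻¹ • (x - y)‖) ^ (-(n:ℝ) - δ) ≤ 1 :=
      Real.rpow_le_one_of_one_le_of_nonpos
        (by linarith [norm_nonneg (t⁻¹ • (x - y))])
        (by have : (0:ℝ) ≤ n := Nat.cast_nonneg n; linarith)
    calc Cφ * (1 + ‖t⁻¹ • (x - y)‖) ^ (-(n:ℝ) - δ) ≤ Cφ * 1 :=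
          mul_le_mul_of_nonneg_left h1 hC0
      _ = Cφ := mul_one _
  have hhint : ∀ (s : Set (EuclideanSpace ℝ (Fin n))), IsCompact s →
      IntegrableOn (fun y => |g y - A|) s volume := by
    intro s hc
    exact ((hg.integrableOn_isCompact hc).sub
      (integrableOn_const hc.measure_lt_top.ne)).abs
  have hWint : ∀ (s : Set (EuclideanSpace ℝ (Fin n))), IsCompact s →
      IntegrableOn (fun y => W y * |g y - A|) s volume := by
    intro s hc
    refine Integrable.bdd_mul (c := t ^ (-(n:ℝ)) * Cφ) (hhint s hc) hWcont.aestronglyMeasurable.restrict ?_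
    exact Filter.Eventually.of_forall fun y => by
      rw [Real.norm_eq_abs, abs_of_nonneg (hWnn y)]; exact hWa y
  have hWb : ∀ (k : ℕ) (y : EuclideanSpace ℝ (Fin n)), y ∉ S k →
      W y ≤ t ^ (-(n:ℝ)) * (Cφ * ((2:ℝ) ^ (k*n))⁻¹ * r ^ k) := by
    intro k y hy
    have hz : (2:ℝ) ^ k ≤ ‖t⁻¹ • (x - y)‖ := norm_scaled_ge ht hy
    refine mul_le_mul_of_nonneg_left ?_ htn0
    refine (hφ _).trans ?_
    have hbase : (0:ℝ) < 2 ^ k := by positivity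
    have h1 : (1 + ‖t⁻¹ • (x - y)‖) ^ (-(n:ℝ) - δ) ≤ ((2:ℝ) ^ k) ^ (-(n:ℝ) - δ) :=
      Real.rpow_le_rpow_of_nonpos hbase
        (by linarith [norm_nonneg (t⁻¹ • (x - y))])
        (by have : (0:ℝ) ≤ n := Nat.cast_nonneg n; linarith)
    have h2 : ((2:ℝ) ^ k) ^ (-(n:ℝ) - δ) = ((2:ℝ) ^ (k*n))⁻¹ * r ^ k := by
      have e1 : ((2:ℝ) ^ k) ^ (-(n:ℝ) - δ) = (2:ℝ) ^ ((k:ℝ) * (-(n:ℝ) - δ)) := by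
        rw [← Real.rpow_natCast 2 k, ← Real.rpow_mul two_pos.le]
      have e2 : ((2:ℝ) ^ (k*n) : ℝ)⁻¹ = (2:ℝ) ^ (-((k*n : ℕ) : ℝ)) := by
        rw [Real.rpow_neg two_pos.le, Real.rpow_natCast]
      have e3 : r ^ k = (2:ℝ) ^ (-δ * (k:ℝ)) := by
        rw [hrdef, ← Real.rpow_natCast ((2:ℝ) ^ (-δ)) k, ← Real.rpow_mul two_pos.le]
      rw [e1, e2, e3, ← Real.rpow_add two_pos]
      congr 1
      push_cast
      ring
    calc Cφ * (1 + ‖t⁻¹ • (x - y)‖) ^ (-(n:ℝ) - δ)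
        ≤ Cφ * ((2:ℝ) ^ k) ^ (-(n:ℝ) - δ) := mul_le_mul_of_nonneg_left h1 hC0
      _ = Cφ * ((2:ℝ) ^ (k*n))⁻¹ * r ^ k := by rw [h2]; ring
  have hMk : ∀ k : ℕ, |cAvg g x ((2:ℝ) ^ (k+1) * t) - A| ≤ ((k:ℝ) + u + 3) * (4 ^ n * B) :=
    fun k => avg_master hg hB hB0 hl hx hlt k u htu hut
  have h4n : (1:ℝ) ≤ 4 ^ n := one_le_pow₀ (by norm_num)
  have hIk : ∀ k : ℕ, ∫ y in S k, |g y - A| ≤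
      ((2:ℝ) ^ (k+1) * t) ^ n * (((k:ℝ) + u + 4) * (4 ^ n * B)) := by
    intro k
    have hsk : (0:ℝ) < (2:ℝ) ^ (k+1) * t := by positivity
    refine (osc_bound hg hB x hsk A).trans ?_
    refine mul_le_mul_of_nonneg_left ?_ (by positivity)
    have hM := hMk k
    have hk0 : (0:ℝ) ≤ k := Nat.cast_nonneg k
    have hu0 : (0:ℝ) ≤ u := Nat.cast_nonneg u
    nlinarith [abs_nonneg (cAvg g x ((2:ℝ) ^ (k+1) * t) - A)]
  set D : ℝ := Cφ * 16 ^ n * B with hD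
  have hD0 : 0 ≤ D := mul_nonneg (mul_nonneg hC0 (by positivity)) hB0
  have h16 : (16:ℝ) ^ n = 4 ^ n * 4 ^ n := by rw [← mul_pow]; norm_num
  have claim : ∀ K : ℕ, ∫ y in S K, W y * |g y - A| ≤
      D * (((u:ℝ) + 4) + ∑ k ∈ Finset.range K, (((k:ℝ) + u + 5) * r ^ k)) := by
    intro K
    induction K with
    | zero =>
      simp only [Finset.range_zero, Finset.sum_empty, add_zero]
      have step1 : ∫ y in S 0, W y * |g y - A| ≤
          ∫ y in S 0, (t ^ (-(n:ℝ)) * Cφ) * |g y - A| := by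
        refine setIntegral_mono_on (hWint _ (hScompact 0))
          ((hhint _ (hScompact 0)).const_mul _) (hSmeas 0) ?_
        exact fun y _ => mul_le_mul_of_nonneg_right (hWa y) (abs_nonneg _)
      have step2 : ∫ y in S 0, (t ^ (-(n:ℝ)) * Cφ) * |g y - A| =
          (t ^ (-(n:ℝ)) * Cφ) * ∫ y in S 0, |g y - A| := integral_const_mul _ _
      have step3 : (t ^ (-(n:ℝ)) * Cφ) * (∫ y in S 0, |g y - A|) ≤
          (t ^ (-(n:ℝ)) * Cφ) * (((2:ℝ) ^ (0+1) * t) ^ n * (((0:ℕ):ℝ) + u + 4) * (4 ^ n * B)) := by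
        refine mul_le_mul_of_nonneg_left ?_ (mul_nonneg htn0 hC0)
        have := hIk 0
        calc (∫ y in S 0, |g y - A|) ≤
            ((2:ℝ) ^ (0+1) * t) ^ n * ((((0:ℕ):ℝ) + u + 4) * (4 ^ n * B)) := hIk 0
          _ = ((2:ℝ) ^ (0+1) * t) ^ n * (((0:ℕ):ℝ) + u + 4) * (4 ^ n * B) := by ring
      have e4 : (t ^ (-(n:ℝ)) * Cφ) * (((2:ℝ) ^ (0+1) * t) ^ n * (((0:ℕ):ℝ) + u + 4) * (4 ^ n * B))
          = Cφ * ((2:ℝ) ^ n * 4 ^ n) * B * ((u:ℝ) + 4) := by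
        rw [htn, mul_pow]
        have htn' : (t:ℝ) ^ n ≠ 0 := by positivity
        push_cast
        field_simp
        ring
      have e5 : Cφ * ((2:ℝ) ^ n * 4 ^ n) * B * ((u:ℝ) + 4) ≤ D * ((u:ℝ) + 4) := by
        rw [hD]
        have h8 : (2:ℝ) ^ n * 4 ^ n ≤ 16 ^ n := by
          rw [← mul_pow]
          exact pow_le_pow_left₀ (by norm_num) (by norm_num) n
        have hu0 : (0:ℝ) ≤ (u:ℝ) + 4 := by positivity
        refine mul_le_mul_of_nonneg_right ?_ hu0
        refine mul_le_mul_of_nonneg_right ?_ hB0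
        exact mul_le_mul_of_nonneg_left h8 hC0
      calc ∫ y in S 0, W y * |g y - A| ≤ _ := step1
        _ = _ := step2
        _ ≤ _ := step3
        _ = _ := e4
        _ ≤ D * ((u:ℝ) + 4) := e5
    | succ K ih =>
      have hsplit : ∫ y in S (K+1), W y * |g y - A| =
          (∫ y in S K, W y * |g y - A|) + ∫ y in S (K+1) \ S K, W y * |g y - A| := by
        rw [← setIntegral_union Set.disjoint_sdiff_right ((hSmeas (K+1)).diff (hSmeas K))
          (hWint _ (hScompact K)) ((hWint _ (hScompact (K+1))).mono_set Set.diff_subset),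
          Set.union_diff_cancel (hSmono (Nat.le_succ K))]
      have hann : ∫ y in S (K+1) \ S K, W y * |g y - A| ≤ D * (((K:ℝ) + u + 5) * r ^ K) := by
        set bk : ℝ := t ^ (-(n:ℝ)) * (Cφ * ((2:ℝ) ^ (K*n))⁻¹ * r ^ K) with hbk
        have hbk0 : 0 ≤ bk :=
          mul_nonneg htn0 (mul_nonneg (mul_nonneg hC0 (by positivity)) (by positivity))
        have s1 : ∫ y in S (K+1) \ S K, W y * |g y - A| ≤
            ∫ y in S (K+1) \ S K, bk * |g y - A| := by
          refine setIntegral_mono_on ((hWint _ (hScompact (K+1))).mono_set Set.diff_subset)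
            (IntegrableOn.mono_set ((hhint _ (hScompact (K+1))).const_mul bk) Set.diff_subset)
            ((hSmeas (K+1)).diff (hSmeas K)) ?_
          intro y hy
          exact mul_le_mul_of_nonneg_right (hWb K y hy.2) (abs_nonneg _)
        have s2 : ∫ y in S (K+1) \ S K, bk * |g y - A| =
            bk * ∫ y in S (K+1) \ S K, |g y - A| := integral_const_mul _ _
        have s3 : ∫ y in S (K+1) \ S K, |g y - A| ≤ ∫ y in S (K+1), |g y - A| :=
          setIntegral_mono_set (hhint _ (hScompact (K+1)))
            (Filter.Eventually.of_forall fun y => abs_nonneg _)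
            (Set.diff_subset).eventuallyLE
        have s4 : ∫ y in S (K+1), |g y - A| ≤
            ((2:ℝ) ^ (K+1+1) * t) ^ n * ((((K:ℝ)+1) + u + 4) * (4 ^ n * B)) := by
          have h := hIk (K+1)
          push_cast at h ⊢
          convert h using 4
        have epow : ((2:ℝ) ^ (K+1+1) * t) ^ n = 2 ^ (K*n) * 4 ^ n * t ^ n := by
          have e : ((2:ℝ) ^ (K+1+1)) = 2 ^ K * 4 := by rw [pow_succ, pow_succ]; ring
          rw [e, mul_pow, mul_pow, pow_mul]
        have e6 : bk * (((2:ℝ) ^ (K+1+1) * t) ^ n * ((((K:ℝ)+1) + u + 4) * (4 ^ n * B)))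
            = D * (((K:ℝ) + u + 5) * r ^ K) := by
          rw [hbk, htn, epow, hD, h16]
          have h2 : ((2:ℝ) ^ (K*n)) ≠ 0 := by positivity
          have h3 : (t:ℝ) ^ n ≠ 0 := by positivity
          field_simp
          ring
        calc ∫ y in S (K+1) \ S K, W y * |g y - A| ≤ _ := s1
          _ = bk * ∫ y in S (K+1) \ S K, |g y - A| := s2
          _ ≤ bk * (((2:ℝ) ^ (K+1+1) * t) ^ n * ((((K:ℝ)+1) + u + 4) * (4 ^ n * B))) := by
              refine mul_le_mul_of_nonneg_left (s3.trans ?_) hbk0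
              refine s4.trans (le_of_eq ?_)
              ring
          _ = D * (((K:ℝ) + u + 5) * r ^ K) := e6
      rw [hsplit, Finset.sum_range_succ]
      have ecast : (((K:ℕ):ℝ) + u + 5) = ((K:ℝ) + u + 5) := by push_cast; ring
      calc (∫ y in S K, W y * |g y - A|) + ∫ y in S (K+1) \ S K, W y * |g y - A|
          ≤ D * (((u:ℝ) + 4) + ∑ k ∈ Finset.range K, (((k:ℝ) + u + 5) * r ^ k))
            + D * (((K:ℝ) + u + 5) * r ^ K) := add_le_add ih hann
        _ = D * (((u:ℝ) + 4) + (∑ k ∈ Finset.range K, (((k:ℝ) + u + 5) * r ^ k)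
            + ((K:ℝ) + u + 5) * r ^ K)) := by ring
  have h1r : (0:ℝ) < 1 - r := by linarith
  have hsum : ∀ K : ℕ, ∑ k ∈ Finset.range K, (((k:ℝ) + u + 5) * r ^ k) ≤ ((u:ℝ) + 5) * T := by
    intro K
    have hu0 : (0:ℝ) ≤ u := Nat.cast_nonneg u
    have h1 : ∀ k ∈ Finset.range K, ((k:ℝ) + u + 5) * r ^ k ≤
        (((u:ℝ) + 5) * ((k:ℝ) + 1)) * r ^ k := by
      intro k _
      have hk0 : (0:ℝ) ≤ k := Nat.cast_nonneg k
      have : ((k:ℝ) + u + 5) ≤ ((u:ℝ) + 5) * ((k:ℝ) + 1) := by nlinarith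
      exact mul_le_mul_of_nonneg_right this (by positivity)
    have hgeom : Summable (fun k : ℕ => r ^ k) := summable_geometric_of_lt_one hr0.le hr1
    have hksum : HasSum (fun k : ℕ => (k:ℝ) * r ^ k) (r / (1-r)^2) :=
      hasSum_coe_mul_geometric_of_norm_lt_one
        (by rw [Real.norm_eq_abs, abs_of_pos hr0]; exact hr1)
    have h2 : ∑ k ∈ Finset.range K, (((k:ℝ) + 1) * r ^ k) ≤ T := by
      have e : ∀ k : ℕ, ((k:ℝ) + 1) * r ^ k = (k:ℝ) * r ^ k + r ^ k := fun k => by ring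
      calc ∑ k ∈ Finset.range K, (((k:ℝ) + 1) * r ^ k)
          = (∑ k ∈ Finset.range K, (k:ℝ) * r ^ k) + ∑ k ∈ Finset.range K, r ^ k := by
            rw [← Finset.sum_add_distrib]
            exact Finset.sum_congr rfl fun k _ => e k
        _ ≤ r / (1-r)^2 + (1-r)⁻¹ := by
            refine add_le_add ?_ ?_
            · exact le_trans (hksum.summable.sum_le_tsum _ (fun k _ => by positivity))
                (le_of_eq hksum.tsum_eq)
            · exact le_trans (hgeom.sum_le_tsum _ (fun k _ => by positivity))
                (le_of_eq (tsum_geometric_of_lt_one hr0.le hr1))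
        _ = T := hTdef.symm
    calc ∑ k ∈ Finset.range K, (((k:ℝ) + u + 5) * r ^ k)
        ≤ ∑ k ∈ Finset.range K, ((((u:ℝ) + 5) * ((k:ℝ) + 1)) * r ^ k) := Finset.sum_le_sum h1
      _ = ((u:ℝ) + 5) * ∑ k ∈ Finset.range K, (((k:ℝ) + 1) * r ^ k) := by
          rw [Finset.mul_sum]
          exact Finset.sum_congr rfl fun k _ => by ring
      _ ≤ ((u:ℝ) + 5) * T := mul_le_mul_of_nonneg_left h2 (by positivity)
  have hbound : ∀ K : ℕ, ∫ y in S K, W y * |g y - A| ≤ D * (((u:ℝ) + 5) * (1 + T)) := by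
    intro K
    refine (claim K).trans ?_
    refine mul_le_mul_of_nonneg_left ?_ hD0
    have := hsum K
    have hu0 : (0:ℝ) ≤ u := Nat.cast_nonneg u
    nlinarith
  -- Conclusion
  have hnormF : ∀ y, ‖t ^ (-(n:ℝ)) * φ (t⁻¹ • (x - y)) * (g y - A)‖ = W y * |g y - A| := by
    intro y
    rw [norm_mul, norm_mul, Real.norm_eq_abs, Real.norm_eq_abs, Real.norm_eq_abs,
      abs_of_nonneg htn0, hWdef]
  have hu5 : (u:ℝ) + 5 ≤ (6 / Real.log 2) * (1 + Real.log (t/l)) := by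
    have hL0 : 0 ≤ Real.log (t/l) := Real.log_nonneg ((one_le_div hl).2 hlt.le)
    have hceil : (u:ℝ) ≤ Real.logb 2 (t/l) + 1 := by
      rw [hu]
      exact (Nat.ceil_lt_add_one (Real.logb_nonneg one_lt_two ((one_le_div hl).2 hlt.le))).le
    have hlogb : Real.logb 2 (t/l) = Real.log (t/l) / Real.log 2 := rfl
    rw [hlogb] at hceil
    rw [div_mul_eq_mul_div, le_div_iff₀ hlog2]
    have : Real.log (t/l) / Real.log 2 * Real.log 2 = Real.log (t/l) := by
      field_simp
    nlinarith [hceil, hL0, hlog2, hlog2']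
  have habs : |Real.log (t/l)| = Real.log (t/l) :=
    abs_of_nonneg (Real.log_nonneg ((one_le_div hl).2 hlt.le))
  by_cases hFi : Integrable (fun y => t ^ (-(n:ℝ)) * φ (t⁻¹ • (x - y)) * (g y - A)) volume
  · have hle1 : |∫ y, t ^ (-(n:ℝ)) * φ (t⁻¹ • (x - y)) * (g y - A)| ≤
        ∫ y, ‖t ^ (-(n:ℝ)) * φ (t⁻¹ • (x - y)) * (g y - A)‖ := by
      rw [← Real.norm_eq_abs]
      exact norm_integral_le_integral_norm _
    have hlim : Filter.Tendsto (fun K => ∫ y in S K, ‖t ^ (-(n:ℝ)) * φ (t⁻¹ • (x - y)) * (g y - A)‖)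
        Filter.atTop (nhds (∫ y, ‖t ^ (-(n:ℝ)) * φ (t⁻¹ • (x - y)) * (g y - A)‖)) := by
      have hint : IntegrableOn (fun y => ‖t ^ (-(n:ℝ)) * φ (t⁻¹ • (x - y)) * (g y - A)‖)
          (⋃ K, S K) volume := by
        rw [hSunion]
        exact hFi.norm.integrableOn
      have h := tendsto_setIntegral_of_monotone hSmeas hSmono hint
      rwa [hSunion, MeasureTheory.setIntegral_univ] at h
    have hle2 : ∫ y, ‖t ^ (-(n:ℝ)) * φ (t⁻¹ • (x - y)) * (g y - A)‖ ≤
        D * (((u:ℝ) + 5) * (1 + T)) := by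
      refine le_of_tendsto' hlim fun K => ?_
      calc ∫ y in S K, ‖t ^ (-(n:ℝ)) * φ (t⁻¹ • (x - y)) * (g y - A)‖
          = ∫ y in S K, W y * |g y - A| := by
            exact setIntegral_congr_fun (hSmeas K) fun y _ => hnormF y
        _ ≤ D * (((u:ℝ) + 5) * (1 + T)) := hbound K
    have hfinal : D * (((u:ℝ) + 5) * (1 + T)) ≤
        (|Cφ| + 1) * 16 ^ n * (6 / Real.log 2) * (1 + T) * (1 + |Real.log (t / l)|) * B := by
      rw [habs, hD]
      have hCle : Cφ ≤ |Cφ| + 1 := by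
        have := le_abs_self Cφ; linarith
      have hL0 : 0 ≤ Real.log (t/l) := Real.log_nonneg ((one_le_div hl).2 hlt.le)
      calc Cφ * 16 ^ n * B * (((u:ℝ) + 5) * (1 + T))
          ≤ (|Cφ| + 1) * 16 ^ n * B * (((6 / Real.log 2) * (1 + Real.log (t/l))) * (1 + T)) := by
            have hu0 : (0:ℝ) ≤ u := Nat.cast_nonneg u
            have m1 : Cφ * 16 ^ n * B ≤ (|Cφ| + 1) * 16 ^ n * B :=
              mul_le_mul_of_nonneg_right
                (mul_le_mul_of_nonneg_right hCle (by positivity)) hB0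
            have m2 : ((u:ℝ) + 5) * (1 + T) ≤
                ((6 / Real.log 2) * (1 + Real.log (t/l))) * (1 + T) :=
              mul_le_mul_of_nonneg_right hu5 (by positivity)
            exact mul_le_mul m1 m2 (by positivity) (by positivity)
        _ = (|Cφ| + 1) * 16 ^ n * (6 / Real.log 2) * (1 + T) * (1 + Real.log (t / l)) * B := by
            ring
    calc |∫ y, t ^ (-(n:ℝ)) * φ (t⁻¹ • (x - y)) * (g y - A)| ≤ _ := hle1
      _ ≤ D * (((u:ℝ) + 5) * (1 + T)) := hle2
      _ ≤ _ := hfinal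
  · rw [integral_undef hFi, abs_zero]
    have h1 : (0:ℝ) ≤ 1 + |Real.log (t / l)| := by positivity
    have h2 : (0:ℝ) ≤ (|Cφ| + 1) * 16 ^ n * (6 / Real.log 2) * (1 + T) := by positivity
    exact mul_nonneg (mul_nonneg h2 h1) hB0
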